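/- (Lemma 15, algebraic form: isomorphisms on the locus where x is invertible.) Assume moreover that x is a unit of R. Then for every λ ∈ k and every integer m, the left R-modules M_λ and M_{λ+m} are isomorphic (here λ + m means λ + m·1_k); an isomorphism M_λ → M_{λ+m} is given by v_λ ↦ x^{−m}·v_{λ+m}, with inverse M_{λ+m} → M_λ given by v_{λ+m} ↦ x^{m}·v_λ. -/

import Mathlib

/-- Lemma 15 (algebraic form): on the locus where `x` is invertible.
`k` a field, `R` an associative unital `k`-algebra, `x, ξ ∈ R`, `h ∈ k` nonzero with
`ξx − xξ = h·1`, and `x` a unit of `R`.  For `λ ∈ k`,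
`M_λ = R ⧸ R(xξ − hλ)` with `v_λ` the image of `1`.  For every `λ` and every integer `m`,
`M_λ ≅ M_{λ+m}` via `v_λ ↦ x^{−m} v_{λ+m}` with inverse `v_{λ+m} ↦ x^m v_λ`. -/
theorem lemma15_algebraic {k : Type*} [Field k] {R : Type*} [Ring R] [Algebra k R]
    (x ξ : R) (h : k) (hh : h ≠ 0) (hrel : ξ * x - x * ξ = h • (1 : R))
    (hx : IsUnit x) (lam : k) (m : ℤ) :
    ∃ φ : (R ⧸ Ideal.span {x * ξ - (h * lam) • (1 : R)}) ≃ₗ[R]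
        (R ⧸ Ideal.span {x * ξ - (h * (lam + (m : k))) • (1 : R)}),
      φ (Submodule.Quotient.mk (1 : R)) =
        ((hx.unit ^ (-m) : Rˣ) : R) • Submodule.Quotient.mk (1 : R) ∧
      φ.symm (Submodule.Quotient.mk (1 : R)) =
        ((hx.unit ^ m : Rˣ) : R) • Submodule.Quotient.mk (1 : R) := by
  set u : Rˣ := hx.unit with hudef
  have hu : (u : R) = x := hx.unit_spec
  -- commutation lemma
  have comm : ∀ n : ℤ, (x*ξ) * ((u^n : Rˣ) : R)
      = ((u^n : Rˣ) : R) * (x*ξ) + ((n : k)*h) • ((u^n : Rˣ) : R) := by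
    have h1 : ξ * x = h • (1:R) + x * ξ := eq_add_of_sub_eq hrel
    have hstep : (x*ξ) * (u:R) = (u:R) * (x*ξ) + h • (u:R) := by
      rw [hu]
      calc x*ξ*x = x * (ξ * x) := by rw [mul_assoc]
      _ = x * (h•(1:R) + x*ξ) := by rw [h1]
      _ = x*(x*ξ) + h•x := by rw [mul_add, mul_smul_comm, mul_one, add_comm]
    have key : (((u⁻¹:Rˣ):R) * (x*ξ) - h • ((u⁻¹:Rˣ):R)) * (u:R) = x*ξ := by
      rw [sub_mul, mul_assoc, hstep, mul_add, ← mul_assoc, ← mul_assoc]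
      simp [mul_smul_comm, smul_mul_assoc]
    have hinv : (x*ξ) * ((u⁻¹:Rˣ):R) = ((u⁻¹:Rˣ):R) * (x*ξ) - h • ((u⁻¹:Rˣ):R) := by
      conv_lhs => rw [← key]
      rw [Units.mul_inv_cancel_right]
    intro n
    induction n using Int.induction_on with
    | zero => simp
    | succ n ih =>
        have hw : ((u^((n:ℤ)+1) : Rˣ) : R) = ((u^(n:ℤ) : Rˣ):R) * (u:R) := by
          rw [zpow_add_one, Units.val_mul]
        rw [hw, ← mul_assoc, ih, add_mul, smul_mul_assoc, mul_assoc, hstep]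
        push_cast
        simp only [mul_assoc, mul_add, mul_smul_comm, smul_smul]
        module
    | pred n ih =>
        have hw : ((u^(-(n:ℤ)-1) : Rˣ) : R) = ((u^(-(n:ℤ)) : Rˣ):R) * ((u⁻¹:Rˣ):R) := by
          rw [zpow_sub_one, Units.val_mul]
        rw [hw, ← mul_assoc, ih, add_mul, smul_mul_assoc, mul_assoc, hinv]
        push_cast
        simp only [mul_assoc, mul_sub, mul_smul_comm, smul_smul]
        module
  set a : R := x * ξ - (h * lam) • (1 : R) with ha
  set b : R := x * ξ - (h * (lam + (m : k))) • (1 : R) with hb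
  set c : R := ((u^(-m) : Rˣ) : R) with hc
  set c' : R := ((u^m : Rˣ) : R) with hc'
  have hcc' : c * c' = 1 := by
    rw [hc, hc', ← Units.val_mul, ← zpow_add]; simp
  have hc'c : c' * c = 1 := by
    rw [hc, hc', ← Units.val_mul, ← zpow_add]; simp
  have hac : a * c = c * b := by
    rw [ha, hb, sub_mul, smul_mul_assoc, one_mul, comm (-m), mul_sub, mul_smul_comm, mul_one]
    push_cast
    module
  have hbc' : b * c' = c' * a := by
    rw [ha, hb, sub_mul, smul_mul_assoc, one_mul, comm m, mul_sub, mul_smul_comm, mul_one]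
    module
  -- the forward and backward linear maps
  have hle1 : Ideal.span {a} ≤ LinearMap.ker
      ((Ideal.span {b}).mkQ.comp (LinearMap.toSpanSingleton R R c)) := by
    rw [Ideal.span_le]
    intro y hy
    rcases Set.mem_singleton_iff.mp hy with rfl
    simp only [SetLike.mem_coe, LinearMap.mem_ker, LinearMap.comp_apply,
      LinearMap.toSpanSingleton_apply, smul_eq_mul, Submodule.mkQ_apply,
      Submodule.Quotient.mk_eq_zero]
    rw [hac]
    exact Ideal.mem_span_singleton'.mpr ⟨c, rfl⟩
  have hle2 : Ideal.span {b} ≤ LinearMap.ker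
      ((Ideal.span {a}).mkQ.comp (LinearMap.toSpanSingleton R R c')) := by
    rw [Ideal.span_le]
    intro y hy
    rcases Set.mem_singleton_iff.mp hy with rfl
    simp only [SetLike.mem_coe, LinearMap.mem_ker, LinearMap.comp_apply,
      LinearMap.toSpanSingleton_apply, smul_eq_mul, Submodule.mkQ_apply,
      Submodule.Quotient.mk_eq_zero]
    rw [hbc']
    exact Ideal.mem_span_singleton'.mpr ⟨c', rfl⟩
  set φ := Submodule.liftQ (Ideal.span {a})
      ((Ideal.span {b}).mkQ.comp (LinearMap.toSpanSingleton R R c)) hle1 with hφ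
  set ψ := Submodule.liftQ (Ideal.span {b})
      ((Ideal.span {a}).mkQ.comp (LinearMap.toSpanSingleton R R c')) hle2 with hψ
  have h1 : φ.comp ψ = LinearMap.id := by
    apply Submodule.linearMap_qext
    ext
    simp [φ, ψ, smul_eq_mul, mul_assoc, hc'c]
  have h2 : ψ.comp φ = LinearMap.id := by
    apply Submodule.linearMap_qext
    ext
    simp [φ, ψ, smul_eq_mul, mul_assoc, hcc']
  refine ⟨LinearEquiv.ofLinear φ ψ h1 h2, ?_, ?_⟩
  · show φ (Submodule.Quotient.mk 1) = _
    rw [hφ, Submodule.liftQ_apply]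
    simp [smul_eq_mul, ← Submodule.Quotient.mk_smul, ← hc]
  · rw [LinearEquiv.ofLinear_symm_apply, hψ, Submodule.liftQ_apply]
    simp [smul_eq_mul, ← Submodule.Quotient.mk_smul, ← hc']
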